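/- Transfer of the matrix factorisation differential under the isomorphism ν: if X = (⋀F_ξ ⊗ R, ∑_i f_i ξ_i* + ∑_i g_i ξ_i) and Y = (⋀F_η ⊗ R, ∑_j u_j η_j* + ∑_j v_j η_j) are Koszul matrix factorisations of W = ∑f_ig_i = ∑u_jv_j, then under the isomorphism ν ⊗ 1: Hom_k(⋀F_ξ, ⋀F_η) ⊗ R ≅ ⋀F_η ⊗ ⋀F_ξ* ⊗ R, the Hom-differential d(α) = d_Y∘α − (−1)^{|α|} α∘d_X corresponds to the operator ∑_j u_j η_j* + ∑_j v_j η_j − ∑_i f_i ξ̄_i + ∑_i g_i ξ̄_i*, where ξ̄_i denotes wedging with ξ_i* in ⋀F_ξ* and ξ̄_i* the corresponding contraction. -/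

import Mathlib

noncomputable section
namespace Stmt13

/- Koszul matrix factorisations.  Over `R = k[x_1,…,x_m]`, the underlying module of
`X = (⋀F_ξ ⊗ R, ∑_i f_i ξ_i^* + ∑_i g_i ξ_i)` is modelled as the free `R`-module on subsets
of `{1,…,r}` (the monomial basis of `⋀F_ξ`), and similarly for
`Y = (⋀F_η ⊗ R, ∑_j u_j η_j^* + ∑_j v_j η_j)` with subsets of `{1,…,s}`.
`Hom_k(⋀F_ξ,⋀F_η) ⊗ R = Hom_R(X,Y)` and `⋀F_η ⊗ ⋀F_ξ^* ⊗ R` is the free `R`-module on pairs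
of subsets. -/

def ksign {n : ℕ} (i : Fin n) (S : Finset (Fin n)) : ℤ :=
  (-1) ^ (S.filter (fun j => j < i)).card

variable {R : Type*} [CommRing R]

/-- Wedge operator `ξ_i ∧ (−)` on `⋀F_ξ ⊗ R`. -/
def wedgeOp {n : ℕ} (i : Fin n) : (Finset (Fin n) → R) →ₗ[R] (Finset (Fin n) → R) where
  toFun f S := if i ∈ S then ksign i S • f (S.erase i) else 0
  map_add' f g := by funext S; by_cases h : i ∈ S <;> simp [h, smul_add]
  map_smul' a f := by funext S; by_cases h : i ∈ S <;> simp [h]; ring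

/-- Contraction operator `ξ_i^* ⌟ (−)` on `⋀F_ξ ⊗ R`. -/
def contrOp {n : ℕ} (i : Fin n) : (Finset (Fin n) → R) →ₗ[R] (Finset (Fin n) → R) where
  toFun f S := if i ∈ S then 0 else ksign i S • f (insert i S)
  map_add' f g := by funext S; by_cases h : i ∈ S <;> simp [h, smul_add]
  map_smul' a f := by funext S; by_cases h : i ∈ S <;> simp [h]; ring

/-- The grading involution `ε`. -/
def epsOp {n : ℕ} : Module.End R (Finset (Fin n) → R) where
  toFun f S := ((-1 : ℤ) ^ S.card) • f S
  map_add' f g := by funext S; simp [smul_add]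
  map_smul' a f := by funext S; simp; ring

/-- The Koszul matrix factorisation differential `∑_i f_i ξ_i^* + ∑_i g_i ξ_i`. -/
def dMF {n : ℕ} (f g : Fin n → R) : Module.End R (Finset (Fin n) → R) :=
  ∑ i, f i • contrOp i + ∑ i, g i • wedgeOp i

variable {r s : ℕ}

/-- The differential on `Hom_R(X,Y)`:
`d(α) = d_Y ∘ α − (−1)^{|α|} α ∘ d_X`, linearly extended from homogeneous `α` using the
grading involutions (`(−1)^{|α|}α = ε_Y ∘ α ∘ ε_X`). -/
def dHom (u v : Fin s → R) (f g : Fin r → R)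
    (φ : (Finset (Fin r) → R) →ₗ[R] (Finset (Fin s) → R)) :
    (Finset (Fin r) → R) →ₗ[R] (Finset (Fin s) → R) :=
  dMF u v ∘ₗ φ - (epsOp ∘ₗ φ ∘ₗ epsOp) ∘ₗ dMF f g

/-- The isomorphism `ν : Hom_k(⋀F_ξ,⋀F_η) ⊗ R ≅ ⋀F_η ⊗ ⋀F_ξ^* ⊗ R`,
`ν(φ) = ∑_{p≥0} ∑_{i_1<⋯<i_p} (−1)^{p(p−1)/2} φ(ξ_{i_1}⋯ξ_{i_p}) ⊗ ξ_{i_1}^*∧⋯∧ξ_{i_p}^*`. -/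
def nu (φ : (Finset (Fin r) → R) →ₗ[R] (Finset (Fin s) → R)) :
    (Finset (Fin s) × Finset (Fin r)) → R := fun p =>
  ((-1 : ℤ) ^ Nat.choose p.2.card 2) • φ (Pi.single p.2 1) p.1

/-- The operator `∑_j u_j η_j^* + ∑_j v_j η_j − ∑_i f_i ξ̄_i + ∑_i g_i ξ̄_i^*` on
`⋀F_η ⊗ ⋀F_ξ^* ⊗ R`, where `ξ̄_i` denotes wedging with `ξ_i^*` in the `⋀F_ξ^*` factor and
`ξ̄_i^*` the corresponding contraction (these carry the Koszul sign `(−1)^{|η\text{-part}|}`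
as operators on the tensor product). -/
def Dnu (u v : Fin s → R) (f g : Fin r → R)
    (z : (Finset (Fin s) × Finset (Fin r)) → R) :
    (Finset (Fin s) × Finset (Fin r)) → R := fun p =>
  (∑ j, u j * (if j ∈ p.1 then 0 else ksign j p.1 • z (insert j p.1, p.2)))
  + (∑ j, v j * (if j ∈ p.1 then ksign j p.1 • z (p.1.erase j, p.2) else 0))
  - (∑ i, f i * (((-1 : ℤ) ^ p.1.card) •
      (if i ∈ p.2 then ksign i p.2 • z (p.1, p.2.erase i) else 0)))
  + (∑ i, g i * (((-1 : ℤ) ^ p.1.card) •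
      (if i ∈ p.2 then 0 else ksign i p.2 • z (p.1, insert i p.2))))

lemma ksign_insert {n : ℕ} (i : Fin n) (T : Finset (Fin n)) :
    ksign i (insert i T) = ksign i T := by
  simp [ksign, Finset.filter_insert]

lemma ksign_erase {n : ℕ} (i : Fin n) (T : Finset (Fin n)) :
    ksign i (T.erase i) = ksign i T := by
  unfold ksign
  rw [Finset.filter_erase, Finset.erase_eq_of_notMem (by simp)]

lemma contr_single {n : ℕ} (i : Fin n) (T : Finset (Fin n)) :
    contrOp i (Pi.single T (1:R)) =
      if i ∈ T then ksign i T • Pi.single (T.erase i) (1:R) else 0 := by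
  funext S
  by_cases hS : i ∈ S
  · have hne : S ≠ T.erase i := fun h => Finset.notMem_erase i T (h ▸ hS)
    by_cases hT : i ∈ T <;> simp [contrOp, hS, hT, Pi.single_apply, hne]
  · by_cases hT : i ∈ T
    · by_cases hST : S = T.erase i
      · subst hST
        simp [contrOp, hS, hT, ksign_erase]
      · have : insert i S ≠ T := by
          intro h
          exact hST (by rw [← h, Finset.erase_insert hS])
        simp [contrOp, hS, hT, Pi.single_apply, this, hST]
    · have : insert i S ≠ T := fun h => hT (h ▸ Finset.mem_insert_self i S)
      simp [contrOp, hS, hT, Pi.single_apply, this]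

lemma wedge_single {n : ℕ} (i : Fin n) (T : Finset (Fin n)) :
    wedgeOp i (Pi.single T (1:R)) =
      if i ∈ T then 0 else ksign i T • Pi.single (insert i T) (1:R) := by
  funext S
  by_cases hS : i ∈ S
  · by_cases hT : i ∈ T
    · have : S.erase i ≠ T := fun h => Finset.notMem_erase i S (h ▸ hT)
      simp [wedgeOp, hS, hT, Pi.single_apply, this]
    · by_cases hST : S = insert i T
      · subst hST
        simp [wedgeOp, hS, hT, ksign_insert, Finset.mem_insert_self]
      · have : S.erase i ≠ T := by
          intro h
          exact hST (by rw [← h, Finset.insert_erase hS])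
        simp [wedgeOp, hS, hT, Pi.single_apply, this, hST]
  · have hne : S ≠ insert i T := fun h => hS (h ▸ Finset.mem_insert_self i T)
    by_cases hT : i ∈ T <;> simp [wedgeOp, hS, hT, Pi.single_apply, hne]

lemma eps_single {n : ℕ} (T : Finset (Fin n)) :
    epsOp (Pi.single T (1:R)) = ((-1:ℤ) ^ T.card) • Pi.single T (1:R) := by
  funext S
  by_cases h : S = T
  · subst h; simp [epsOp]
  · simp [epsOp, Pi.single_apply, h]

/-- If `X = (⋀F_ξ ⊗ R, ∑f_iξ_i^* + ∑g_iξ_i)` and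
`Y = (⋀F_η ⊗ R, ∑u_jη_j^* + ∑v_jη_j)` are Koszul matrix factorisations of
`W = ∑f_ig_i = ∑u_jv_j`, then under `ν ⊗ 1 : Hom_k(⋀F_ξ,⋀F_η) ⊗ R ≅ ⋀F_η ⊗ ⋀F_ξ^* ⊗ R` the
Hom-differential corresponds to `∑_j u_j η_j^* + ∑_j v_j η_j − ∑_i f_i ξ̄_i + ∑_i g_i ξ̄_i^*`. -/
theorem nu_transfers_differential {k : Type*} [CommRing k] {m : ℕ}
    (W : MvPolynomial (Fin m) k) (u v : Fin s → MvPolynomial (Fin m) k)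
    (f g : Fin r → MvPolynomial (Fin m) k)
    (hfg : ∑ i, f i * g i = W) (huv : ∑ j, u j * v j = W)
    (φ : (Finset (Fin r) → MvPolynomial (Fin m) k) →ₗ[MvPolynomial (Fin m) k]
          (Finset (Fin s) → MvPolynomial (Fin m) k)) :
    nu (dHom u v f g φ) = Dnu u v f g (nu φ) := by
  classical
  funext p
  obtain ⟨S, T⟩ := p
  have hd : dMF f g (Pi.single T (1:MvPolynomial (Fin m) k)) =
      ∑ i, (if i ∈ T then
              ksign i T • f i • (Pi.single (T.erase i) 1 :
                Finset (Fin r) → MvPolynomial (Fin m) k)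
            else
              ksign i T • g i • (Pi.single (insert i T) 1 :
                Finset (Fin r) → MvPolynomial (Fin m) k)) := by
    simp only [dMF, LinearMap.add_apply, LinearMap.sum_apply, LinearMap.smul_apply,
      contr_single, wedge_single, smul_ite, smul_zero, ← Finset.sum_add_distrib]
    refine Finset.sum_congr rfl fun i _ => ?_
    by_cases h : i ∈ T <;> simp [h, smul_comm]
  simp only [nu, Dnu, dHom, LinearMap.sub_apply, LinearMap.comp_apply]
  rw [hd]
  simp only [map_sum, apply_ite (f := ⇑(epsOp (R := MvPolynomial (Fin m) k))), map_zsmul,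
    map_smul, eps_single, apply_ite (f := ⇑φ)]
  simp only [dMF, contrOp, wedgeOp, epsOp, LinearMap.sum_apply, LinearMap.add_apply,
    LinearMap.smul_apply, LinearMap.coe_mk, AddHom.coe_mk, Finset.sum_apply, Pi.smul_apply,
    Pi.sub_apply, Pi.add_apply, smul_eq_mul, zsmul_eq_mul, apply_ite (f := fun (t : Finset (Fin s) → MvPolynomial (Fin m) k) => t S),
    Pi.zero_apply, Pi.mul_apply, Pi.pow_apply, Pi.neg_apply, Pi.one_apply]
  push_cast [ksign]
  simp only [Pi.pow_apply, Pi.neg_apply, Pi.one_apply, Pi.intCast_apply, Int.cast_pow,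
    Int.cast_neg, Int.cast_one]
  rw [mul_sub, mul_add, Finset.mul_sum, Finset.mul_sum, Finset.mul_sum, sub_add,
    ← Finset.sum_sub_distrib]
  refine congrArg₂ (· - ·) (congrArg₂ (· + ·) ?_ ?_) ?_ <;>
    refine Finset.sum_congr rfl fun x _ => ?_
  · by_cases hx : x ∈ S <;> simp only [hx, if_true, if_false, mul_zero] <;> ring
  · by_cases hx : x ∈ S <;> simp only [hx, if_true, if_false, mul_zero] <;> ring
  · by_cases hx : x ∈ T
    · simp only [hx, if_true, if_false, mul_zero, sub_zero]
      rw [show T.card = (T.erase x).card + 1 from (Finset.card_erase_add_one hx).symm,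
        Nat.choose_succ_succ, Nat.choose_one_right, pow_add]
      rcases Nat.even_or_odd (T.erase x).card with hp | hp
      · rw [Even.neg_one_pow hp]; ring
      · rw [Odd.neg_one_pow hp]; ring
    · simp only [hx, if_true, if_false, mul_zero, zero_sub]
      rw [Finset.card_insert_of_notMem hx, Nat.choose_succ_succ, Nat.choose_one_right,
        pow_add, pow_succ]
      ring

end Stmt13
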